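/- arXiv:2010.08039 — 3 statements merged into one kernel-verified Lean document; each statement's English description precedes it below -/
import Mathlib

section
/- A complete metric space satisfying the approximate-midpoint property (for every r > 1/2 and points x,y there exists z with max{d(x,z), d(z,y)} ≤ r·d(x,y)) is a length space: the distance between any two points equals the infimum of lengths of continuous paths joining them. -/
open Set Filter Topology
open scoped ENNReal NNReal

/-- Auxiliary: the dyadic approximation sequence. `dyadicSeq x y mid n k` is the point
assigned to the dyadic rational `k / 2^n`, built by repeatedly inserting approximate
midpoints `mid n a b`. -/
private noncomputable def dyadicSeq {M : Type*} (x y : M) (mid : ℕ → M → M → M) :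
    ℕ → ℕ → M
  | 0, k => if k = 0 then x else y
  | n + 1, k =>
      if k % 2 = 0 then dyadicSeq x y mid n (k / 2)
      else mid n (dyadicSeq x y mid n (k / 2)) (dyadicSeq x y mid n (k / 2 + 1))

private lemma exists_curve {M : Type*} [MetricSpace M] [CompleteSpace M]
    (h : ∀ r : ℝ, 1 / 2 < r → ∀ x y : M, ∃ z : M,
      max (dist x z) (dist z y) ≤ r * dist x y)
    (x y : M) {ε : ℝ} (hε : 0 < ε) :
    ∃ c : ℝ → M, ContinuousOn c (Set.Icc 0 1) ∧ c 0 = x ∧ c 1 = y ∧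
      eVariationOn c (Set.Icc 0 1) ≤ ENNReal.ofReal (Real.exp ε * dist x y) := by
  classical
  -- approximate midpoint function, with ratio (1/2)(1 + ε/2^(n+1)) at level n
  set r : ℕ → ℝ := fun n => 1 / 2 + ε / 2 ^ (n + 2) with hr_def
  have hr_nonneg : ∀ n, 0 ≤ r n := by
    intro n; simp only [hr_def]; positivity
  have hr_half : ∀ n, 1 / 2 < r n := by
    intro n
    have : (0:ℝ) < ε / 2 ^ (n + 2) := by positivity
    simp only [hr_def]; linarith
  have hmid0 : ∀ (n : ℕ) (a b : M), ∃ z : M,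
      dist a z ≤ r n * dist a b ∧ dist z b ≤ r n * dist a b := by
    intro n a b
    obtain ⟨z, hz⟩ := h (r n) (hr_half n) a b
    exact ⟨z, (le_max_left _ _).trans hz, (le_max_right _ _).trans hz⟩
  choose mid hmid1 hmid2 using hmid0
  have hmid_self : ∀ n (a : M), mid n a a = a := by
    intro n a
    have := hmid1 n a a
    simp only [dist_self, mul_zero] at this
    exact (dist_le_zero.mp ((dist_comm a (mid n a a)) ▸ this)).symm
  set f : ℕ → ℕ → M := dyadicSeq x y mid with hf_def
  have f_even : ∀ n m, f (n + 1) (2 * m) = f n m := by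
    intro n m
    simp [hf_def, dyadicSeq, Nat.mul_mod_right, Nat.mul_div_cancel_left _ (by norm_num : 0 < 2)]
  have f_odd : ∀ n m, f (n + 1) (2 * m + 1) = mid n (f n m) (f n (m + 1)) := by
    intro n m
    have h1 : (2 * m + 1) % 2 = 1 := by omega
    have h2 : (2 * m + 1) / 2 = m := by omega
    simp [hf_def, dyadicSeq, h1, h2]
  have f_zero : ∀ n, f n 0 = x := by
    intro n
    induction n with
    | zero => simp [hf_def, dyadicSeq]
    | succ n ih => have := f_even n 0; rw [mul_zero] at this; rw [this, ih]
  have f_ge : ∀ n k, 2 ^ n ≤ k → f n k = y := by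
    intro n
    induction n with
    | zero => intro k hk; have : k ≠ 0 := by omega
              simp [hf_def, dyadicSeq, this]
    | succ n ih =>
        intro k hk
        rcases Nat.even_or_odd k with ⟨m, hm⟩ | ⟨m, hm⟩
        · subst hm
          rw [show m + m = 2 * m by ring, f_even]
          exact ih m (by omega)
        · subst hm
          rw [f_odd, ih m (by omega), ih (m + 1) (by omega), hmid_self]
  have f_top : ∀ n, f n (2 ^ n) = y := fun n => f_ge n _ le_rfl
  -- the product bound
  set P : ℕ → ℝ := fun n => ∏ j ∈ Finset.range n, (1 + ε / 2 ^ (j + 1)) with hP_def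
  have hP_nonneg : ∀ n, 0 ≤ P n := by
    intro n
    apply Finset.prod_nonneg
    intro j _
    have : (0:ℝ) < ε / 2 ^ (j + 1) := by positivity
    linarith
  have hP_le : ∀ n, P n ≤ Real.exp ε := by
    intro n
    calc P n ≤ ∏ j ∈ Finset.range n, Real.exp (ε / 2 ^ (j + 1)) := by
          apply Finset.prod_le_prod
          · intro j _
            have : (0:ℝ) < ε / 2 ^ (j + 1) := by positivity
            linarith
          · intro j _
            have := Real.add_one_le_exp (ε / 2 ^ (j + 1))
            linarith
      _ = Real.exp (∑ j ∈ Finset.range n, ε / 2 ^ (j + 1)) := (Real.exp_sum _ _).symm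
      _ ≤ Real.exp ε := by
          apply Real.exp_le_exp.mpr
          have h1 : ∑ j ∈ Finset.range n, ε / 2 ^ (j + 1)
              = (ε / 2) * ∑ j ∈ Finset.range n, (1 / 2 : ℝ) ^ j := by
            rw [Finset.mul_sum]
            refine Finset.sum_congr rfl fun j _ => ?_
            rw [div_pow, one_pow, pow_succ]
            ring
          rw [h1]
          nlinarith [sum_geometric_two_le n]
  -- the key distance invariant
  have hinv : ∀ n k, dist (f n k) (f n (k + 1)) ≤ dist x y * (1 / 2) ^ n * P n := by
    intro n
    induction n with
    | zero =>
        intro k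
        rcases Nat.eq_zero_or_pos k with rfl | hk
        · simp [hP_def, hf_def, dyadicSeq]
        · rw [f_ge 0 k (by omega), f_ge 0 (k + 1) (by omega)]
          simp [dist_self]
          positivity
    | succ n ih =>
        intro k
        have hrP : r n * (dist x y * (1 / 2) ^ n * P n)
            = dist x y * (1 / 2) ^ (n + 1) * P (n + 1) := by
          simp only [hP_def, Finset.prod_range_succ, hr_def]
          rw [pow_succ, pow_succ]
          field_simp
          ring
        rcases Nat.even_or_odd k with ⟨m, hm⟩ | ⟨m, hm⟩
        · subst hm
          rw [show m + m = 2 * m by ring, show 2 * m + 1 = 2 * m + 1 from rfl, f_even, f_odd]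
          calc dist (f n m) (mid n (f n m) (f n (m + 1)))
              ≤ r n * dist (f n m) (f n (m + 1)) := hmid1 n _ _
            _ ≤ r n * (dist x y * (1 / 2) ^ n * P n) := by
                exact mul_le_mul_of_nonneg_left (ih m) (hr_nonneg n)
            _ = _ := hrP
        · subst hm
          rw [show 2 * m + 1 + 1 = 2 * (m + 1) by ring, f_odd, f_even]
          calc dist (mid n (f n m) (f n (m + 1))) (f n (m + 1))
              ≤ r n * dist (f n m) (f n (m + 1)) := hmid2 n _ _
            _ ≤ r n * (dist x y * (1 / 2) ^ n * P n) := by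
                exact mul_le_mul_of_nonneg_left (ih m) (hr_nonneg n)
            _ = _ := hrP
  -- global constant
  set C : ℝ := Real.exp ε * dist x y with hC_def
  have hC_nonneg : 0 ≤ C := by positivity
  set B : ℕ → ℝ := fun n => C * (1 / 2) ^ n with hB_def
  have hB_nonneg : ∀ n, 0 ≤ B n := by intro n; positivity
  have hinv' : ∀ n k, dist (f n k) (f n (k + 1)) ≤ B n := by
    intro n k
    refine (hinv n k).trans ?_
    simp only [hB_def, hC_def]
    calc dist x y * (1 / 2) ^ n * P n ≤ dist x y * (1 / 2) ^ n * Real.exp ε := by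
          apply mul_le_mul_of_nonneg_left (hP_le n); positivity
      _ = Real.exp ε * dist x y * (1 / 2) ^ n := by ring
  -- chain bound
  have hchain : ∀ n k l, k ≤ l → dist (f n k) (f n l) ≤ ((l : ℝ) - k) * B n := by
    intro n k l hkl
    induction l, hkl using Nat.le_induction with
    | base => simp [dist_self]
    | succ l hkl ih =>
        calc dist (f n k) (f n (l + 1)) ≤ dist (f n k) (f n l) + dist (f n l) (f n (l + 1)) :=
              dist_triangle _ _ _
          _ ≤ ((l : ℝ) - k) * B n + B n := add_le_add ih (hinv' n l)
          _ = (((l + 1 : ℕ) : ℝ) - (k:ℝ)) * B n := by push_cast; ring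
  -- the approximating functions
  set u : ℕ → ℝ → M := fun n t => f n ⌊t * 2 ^ n⌋₊ with hu_def
  have hfloor2 : ∀ s : ℝ, 0 ≤ s → ⌊2 * s⌋₊ = 2 * ⌊s⌋₊ ∨ ⌊2 * s⌋₊ = 2 * ⌊s⌋₊ + 1 := by
    intro s hs
    have h1 : 2 * ⌊s⌋₊ ≤ ⌊2 * s⌋₊ := by
      apply Nat.le_floor
      push_cast
      linarith [Nat.floor_le hs]
    have h2 : ⌊2 * s⌋₊ < 2 * ⌊s⌋₊ + 2 := by
      rw [Nat.floor_lt (by linarith)]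
      push_cast
      linarith [Nat.lt_floor_add_one s]
    omega
  have hstep : ∀ n (t : ℝ), 0 ≤ t → dist (u n t) (u (n + 1) t) ≤ B (n + 1) := by
    intro n t ht
    have hkey : t * 2 ^ (n + 1) = 2 * (t * 2 ^ n) := by ring
    have ht2 : 0 ≤ t * 2 ^ n := by positivity
    rcases hfloor2 (t * 2 ^ n) ht2 with heq | heq
    · simp only [hu_def, hkey, heq, f_even, dist_self]
      exact hB_nonneg _
    · simp only [hu_def, hkey, heq]
      have := hinv' (n + 1) (2 * ⌊t * 2 ^ n⌋₊)
      rwa [f_even] at this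
  have htail : ∀ (t : ℝ), 0 ≤ t → ∀ n m, n ≤ m →
      dist (u n t) (u m t) ≤ C * ((1 / 2) ^ n - (1 / 2) ^ m) := by
    intro t ht n m hnm
    induction m, hnm using Nat.le_induction with
    | base => simp [dist_self]
    | succ m hnm ih =>
        calc dist (u n t) (u (m + 1) t) ≤ dist (u n t) (u m t) + dist (u m t) (u (m + 1) t) :=
              dist_triangle _ _ _
          _ ≤ C * ((1 / 2) ^ n - (1 / 2) ^ m) + C * (1 / 2) ^ (m + 1) :=
              add_le_add ih (hstep m t ht)
          _ = C * ((1 / 2) ^ n - (1 / 2) ^ (m + 1)) := by rw [pow_succ]; ring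
  -- Cauchy and the limit curve
  have hu_neg : ∀ n (t : ℝ), t < 0 → u n t = x := by
    intro n t ht
    have : t * 2 ^ n ≤ 0 := by
      apply mul_nonpos_of_nonpos_of_nonneg (le_of_lt ht)
      positivity
    simp only [hu_def, Nat.floor_of_nonpos this, f_zero]
  have hcauchy : ∀ t : ℝ, CauchySeq (fun n => u n t) := by
    intro t
    rcases lt_or_ge t 0 with ht | ht
    · simp only [hu_neg _ t ht]
      exact cauchySeq_const x
    · apply cauchySeq_of_le_geometric (1 / 2) C (by norm_num)
      intro n
      calc dist (u n t) (u (n + 1) t) ≤ C * ((1 / 2) ^ n - (1 / 2) ^ (n + 1)) :=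
            htail t ht n (n + 1) (Nat.le_succ n)
        _ ≤ C * (1 / 2) ^ n := by
            apply mul_le_mul_of_nonneg_left _ hC_nonneg
            have : (0:ℝ) ≤ (1 / 2 : ℝ) ^ (n + 1) := by positivity
            linarith
  haveI : Nonempty M := ⟨x⟩
  set c : ℝ → M := fun t => limUnder atTop (fun n => u n t) with hc_def
  have hconv : ∀ t : ℝ, Tendsto (fun n => u n t) atTop (𝓝 (c t)) := by
    intro t
    obtain ⟨a, ha⟩ := cauchySeq_tendsto_of_complete (hcauchy t)
    simp only [hc_def]
    rwa [ha.limUnder_eq]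
  have hc0 : c 0 = x := by
    have : ∀ n, u n 0 = x := by
      intro n
      simp only [hu_def, zero_mul, Nat.floor_zero, f_zero]
    refine tendsto_nhds_unique (hconv 0) ?_
    simp only [this]
    exact tendsto_const_nhds
  have hc1 : c 1 = y := by
    have : ∀ n, u n 1 = y := by
      intro n
      have : (1 : ℝ) * 2 ^ n = ((2 ^ n : ℕ) : ℝ) := by push_cast; ring
      simp only [hu_def, this, Nat.floor_natCast, f_top]
    refine tendsto_nhds_unique (hconv 1) ?_
    simp only [this]
    exact tendsto_const_nhds
  -- distance to the limit
  have hdist_lim : ∀ (t : ℝ), 0 ≤ t → ∀ n, dist (u n t) (c t) ≤ C * (1 / 2) ^ n := by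
    intro t ht n
    have htend : Tendsto (fun m => dist (u n t) (u m t)) atTop (𝓝 (dist (u n t) (c t))) :=
      tendsto_const_nhds.dist (hconv t)
    refine le_of_tendsto htend ?_
    filter_upwards [eventually_ge_atTop n] with m hm
    calc dist (u n t) (u m t) ≤ C * ((1 / 2) ^ n - (1 / 2) ^ m) := htail t ht n m hm
      _ ≤ C * (1 / 2) ^ n := by
          apply mul_le_mul_of_nonneg_left _ hC_nonneg
          have : (0:ℝ) ≤ (1 / 2 : ℝ) ^ m := by positivity
          linarith
  -- Lipschitz bound on u
  have hu_lip : ∀ n (s t : ℝ), 0 ≤ s → s ≤ t →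
      dist (u n s) (u n t) ≤ C * (t - s) + B n := by
    intro n s t hs hst
    have ht : 0 ≤ t := hs.trans hst
    have hmono : ⌊s * 2 ^ n⌋₊ ≤ ⌊t * 2 ^ n⌋₊ := by
      apply Nat.floor_le_floor
      have : (0:ℝ) ≤ (2:ℝ) ^ n := by positivity
      nlinarith
    have hdiff : ((⌊t * 2 ^ n⌋₊ : ℝ) - ⌊s * 2 ^ n⌋₊) ≤ t * 2 ^ n - s * 2 ^ n + 1 := by
      have h1 : (⌊t * 2 ^ n⌋₊ : ℝ) ≤ t * 2 ^ n := Nat.floor_le (by positivity)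
      have h2 : s * 2 ^ n < ⌊s * 2 ^ n⌋₊ + 1 := Nat.lt_floor_add_one _
      linarith
    calc dist (u n s) (u n t)
        ≤ ((⌊t * 2 ^ n⌋₊ : ℝ) - ⌊s * 2 ^ n⌋₊) * B n := hchain n _ _ hmono
      _ ≤ (t * 2 ^ n - s * 2 ^ n + 1) * B n := by
          apply mul_le_mul_of_nonneg_right hdiff (hB_nonneg n)
      _ = C * (t - s) + B n := by
          simp only [hB_def]
          have h2n : ((2:ℝ) ^ n) * (1 / 2 : ℝ) ^ n = 1 := by
            rw [← mul_pow]; norm_num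
          calc (t * 2 ^ n - s * 2 ^ n + 1) * (C * (1 / 2) ^ n)
              = C * (t - s) * (2 ^ n * (1 / 2) ^ n) + C * (1 / 2) ^ n := by ring
            _ = C * (t - s) + C * (1 / 2) ^ n := by rw [h2n, mul_one]
  -- Lipschitz bound on c
  have hc_lip : ∀ s t : ℝ, 0 ≤ s → s ≤ t → dist (c s) (c t) ≤ C * (t - s) := by
    intro s t hs hst
    have ht : 0 ≤ t := hs.trans hst
    have key : ∀ n : ℕ, dist (c s) (c t) ≤ C * (t - s) + 3 * C * (1 / 2) ^ n := by
      intro n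
      calc dist (c s) (c t)
          ≤ dist (c s) (u n s) + dist (u n s) (u n t) + dist (u n t) (c t) :=
            dist_triangle4 _ _ _ _
        _ ≤ C * (1 / 2) ^ n + (C * (t - s) + C * (1 / 2) ^ n) + C * (1 / 2) ^ n := by
            gcongr
            · rw [dist_comm]; exact hdist_lim s hs n
            · exact hu_lip n s t hs hst
            · exact hdist_lim t ht n
        _ = C * (t - s) + 3 * C * (1 / 2) ^ n := by ring
    have htend : Tendsto (fun n : ℕ => C * (t - s) + 3 * C * (1 / 2) ^ n) atTop
        (𝓝 (C * (t - s) + 3 * C * 0)) := by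
      apply tendsto_const_nhds.add
      exact (tendsto_pow_atTop_nhds_zero_of_lt_one (by norm_num) (by norm_num)).const_mul _
    have := ge_of_tendsto' htend key
    simpa using this
  have hlip : LipschitzOnWith (Real.toNNReal C) c (Set.Icc 0 1) := by
    apply LipschitzOnWith.of_dist_le'
    intro a ha b hb
    rcases le_total a b with hab | hab
    · rw [Real.dist_eq, abs_of_nonpos (by linarith : a - b ≤ 0), neg_sub]
      exact hc_lip a b ha.1 hab
    · rw [dist_comm (c a) (c b), dist_comm a b,
        Real.dist_eq, abs_of_nonpos (by linarith : b - a ≤ 0), neg_sub]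
      exact hc_lip b a hb.1 hab
  refine ⟨c, hlip.continuousOn, hc0, hc1, ?_⟩
  have hvar : eVariationOn c (Set.Icc 0 1) ≤ (Real.toNNReal C : ℝ≥0∞) * eVariationOn
      (id : ℝ → ℝ) (Set.Icc 0 1) := by
    have := hlip.comp_eVariationOn_le (Set.mapsTo_id (Set.Icc (0:ℝ) 1))
    simpa using this
  have hid : eVariationOn (id : ℝ → ℝ) (Set.Icc 0 1) ≤ 1 := by
    have h01 : (0:ℝ) ∈ Set.Icc (0:ℝ) 1 := by norm_num
    have h11 : (1:ℝ) ∈ Set.Icc (0:ℝ) 1 := by norm_num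
    have := (monotoneOn_id (s := Set.Icc (0:ℝ) 1)).eVariationOn_le h01 h11
    simpa using this
  calc eVariationOn c (Set.Icc 0 1)
      ≤ (Real.toNNReal C : ℝ≥0∞) * eVariationOn (id : ℝ → ℝ) (Set.Icc 0 1) := hvar
    _ ≤ (Real.toNNReal C : ℝ≥0∞) * 1 := by gcongr
    _ = ENNReal.ofReal C := by rw [mul_one, ENNReal.ofReal]

/-- A complete metric space with the approximate-midpoint property is a length space:
the distance between any two points is the infimum of the lengths (total variations)
of continuous curves joining them. -/
theorem stmt_6 {M : Type*} [MetricSpace M] [CompleteSpace M]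
    (h : ∀ r : ℝ, 1 / 2 < r → ∀ x y : M, ∃ z : M,
      max (dist x z) (dist z y) ≤ r * dist x y) :
    ∀ x y : M, edist x y =
      ⨅ (c : ℝ → M) (_ : ContinuousOn c (Set.Icc 0 1)) (_ : c 0 = x) (_ : c 1 = y),
        eVariationOn c (Set.Icc 0 1) := by
  intro x y
  apply le_antisymm
  · refine le_iInf fun c => le_iInf fun hc => le_iInf fun h0 => le_iInf fun h1 => ?_
    have := eVariationOn.edist_le c (show (0:ℝ) ∈ Set.Icc (0:ℝ) 1 by norm_num)
      (show (1:ℝ) ∈ Set.Icc (0:ℝ) 1 by norm_num)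
    rwa [h0, h1] at this
  · have key : ∀ ε : ℝ, 0 < ε →
        (⨅ (c : ℝ → M) (_ : ContinuousOn c (Set.Icc 0 1)) (_ : c 0 = x) (_ : c 1 = y),
          eVariationOn c (Set.Icc 0 1)) ≤ ENNReal.ofReal (Real.exp ε * dist x y) := by
      intro ε hε
      obtain ⟨c, hc, h0, h1, hvar⟩ := exists_curve h x y hε
      exact le_trans (iInf_le_of_le c (iInf_le_of_le hc (iInf_le_of_le h0
        (iInf_le_of_le h1 le_rfl)))) hvar
    have htend : Tendsto (fun ε : ℝ => ENNReal.ofReal (Real.exp ε * dist x y)) (𝓝[>] 0)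
        (𝓝 (ENNReal.ofReal (Real.exp 0 * dist x y))) := by
      apply Tendsto.mono_left _ nhdsWithin_le_nhds
      exact (ENNReal.continuous_ofReal.comp ((Real.continuous_exp).mul continuous_const)).tendsto 0
    rw [show ENNReal.ofReal (Real.exp 0 * dist x y) = edist x y by
      rw [Real.exp_zero, one_mul, edist_dist]] at htend
    refine ge_of_tendsto htend ?_
    filter_upwards [self_mem_nhdsWithin] with ε hε
    exact key ε hε
end

section
/- Finite Hewitt–Savage theorem: the extreme points of the convex set of S_n-invariant Borel probability measures on M^n are precisely the measures of the form (1/n!) Σ_{σ∈S_n} δ_{x∘σ} for x ∈ M^n, and every symmetric probability measure on M^n is a mixture of such extreme points. -/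
open MeasureTheory

/-- The uniform measure `(1/n!) Σ_{σ∈S_n} δ_{x∘σ}` on the `S_n`-orbit of `x ∈ M^n`. -/
noncomputable def orbitMeasure {M : Type*} [MeasurableSpace M] (n : ℕ) (x : Fin n → M) :
    Measure (Fin n → M) :=
  ((n.factorial : ENNReal))⁻¹ • ∑ σ : Equiv.Perm (Fin n), Measure.dirac (x ∘ σ)

/-- A measure on `M^n` is symmetric if it is invariant under the coordinate-permutation
action of `S_n`. -/
def IsSymmetric {M : Type*} [MeasurableSpace M] (n : ℕ) (P : Measure (Fin n → M)) : Prop :=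
  ∀ σ : Equiv.Perm (Fin n), P.map (fun x => x ∘ σ) = P

section Aux

variable {M : Type*} [MeasurableSpace M] {n : ℕ}

lemma measurable_permMap (σ : Equiv.Perm (Fin n)) :
    Measurable (fun x : Fin n → M => x ∘ σ) :=
  measurable_pi_lambda _ fun _ => measurable_pi_apply _

lemma factorial_ne_zero' : ((n.factorial : ENNReal)) ≠ 0 := by
  exact_mod_cast n.factorial_ne_zero

lemma orbitMeasure_apply (x : Fin n → M) {s : Set (Fin n → M)} (hs : MeasurableSet s) :
    orbitMeasure n x s
      = (n.factorial : ENNReal)⁻¹ * ∑ σ : Equiv.Perm (Fin n), s.indicator 1 (x ∘ σ) := by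
  rw [orbitMeasure, Measure.smul_apply, Measure.finset_sum_apply, smul_eq_mul]
  congr 1
  exact Finset.sum_congr rfl fun σ _ => Measure.dirac_apply' _ hs

lemma orbitMeasure_prob (x : Fin n → M) : IsProbabilityMeasure (orbitMeasure n x) := by
  constructor
  rw [orbitMeasure_apply x MeasurableSet.univ]
  simp only [Set.indicator_univ, Pi.one_apply, Finset.sum_const, Finset.card_univ,
    Fintype.card_perm, Fintype.card_fin, nsmul_eq_mul, mul_one]
  exact ENNReal.inv_mul_cancel factorial_ne_zero' (ENNReal.natCast_ne_top _)

lemma comp_mul (x : Fin n → M) (σ τ : Equiv.Perm (Fin n)) :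
    x ∘ ⇑(σ * τ) = (x ∘ σ) ∘ τ := rfl

lemma orbitMeasure_comp (x : Fin n → M) (τ : Equiv.Perm (Fin n)) :
    orbitMeasure n (x ∘ τ) = orbitMeasure n x := by
  unfold orbitMeasure
  congr 1
  apply Fintype.sum_equiv (Equiv.mulLeft τ)
  intro σ
  rw [Equiv.coe_mulLeft, comp_mul]

lemma orbitMeasure_symm (x : Fin n → M) : IsSymmetric n (orbitMeasure n x) := by
  intro τ
  ext s hs
  rw [Measure.map_apply (measurable_permMap τ) hs,
    orbitMeasure_apply x ((measurable_permMap τ) hs), orbitMeasure_apply x hs]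
  congr 1
  apply Fintype.sum_equiv (Equiv.mulRight τ)
  intro σ
  rw [Equiv.coe_mulRight, comp_mul]
  rfl

lemma measurable_orbitMeasure :
    Measurable (orbitMeasure n : (Fin n → M) → Measure (Fin n → M)) := by
  apply Measure.measurable_of_measurable_coe
  intro s hs
  simp_rw [orbitMeasure_apply _ hs]
  apply Measurable.const_mul
  apply Finset.measurable_sum
  intro σ _
  exact (measurable_const.indicator hs).comp (measurable_permMap σ)

lemma bind_orbitMeasure {P : Measure (Fin n → M)} [IsProbabilityMeasure P]
    (hP : IsSymmetric n P) : P.bind (orbitMeasure n) = P := by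
  ext s hs
  rw [Measure.bind_apply hs measurable_orbitMeasure.aemeasurable]
  have hmeas : ∀ σ : Equiv.Perm (Fin n),
      Measurable fun y : Fin n → M => s.indicator (1 : (Fin n → M) → ENNReal) (y ∘ σ) :=
    fun σ => (measurable_const.indicator hs).comp (measurable_permMap σ)
  calc ∫⁻ y, orbitMeasure n y s ∂P
      = ∫⁻ y, (n.factorial : ENNReal)⁻¹
          * ∑ σ : Equiv.Perm (Fin n), s.indicator 1 (y ∘ σ) ∂P := by
        apply lintegral_congr
        intro y
        rw [orbitMeasure_apply _ hs]
    _ = (n.factorial : ENNReal)⁻¹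
          * ∑ σ : Equiv.Perm (Fin n), ∫⁻ y, s.indicator 1 (y ∘ σ) ∂P := by
        rw [lintegral_const_mul _ (Finset.measurable_sum _ fun σ _ => hmeas σ),
          lintegral_finset_sum _ fun σ _ => hmeas σ]
    _ = (n.factorial : ENNReal)⁻¹ * ∑ _σ : Equiv.Perm (Fin n), P s := by
        congr 1
        apply Finset.sum_congr rfl
        intro σ _
        have h1 : ∫⁻ y, s.indicator (1 : (Fin n → M) → ENNReal) (y ∘ σ) ∂P
            = ∫⁻ z, s.indicator (1 : (Fin n → M) → ENNReal) z
                ∂(P.map fun y : Fin n → M => y ∘ σ) :=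
          (lintegral_map (measurable_const.indicator hs) (measurable_permMap σ)).symm
        rw [h1, hP σ, lintegral_indicator_one hs]
    _ = P s := by
        simp only [Finset.sum_const, Finset.card_univ, Fintype.card_perm, Fintype.card_fin,
          nsmul_eq_mul, ← mul_assoc]
        rw [ENNReal.inv_mul_cancel factorial_ne_zero' (ENNReal.natCast_ne_top _), one_mul]

lemma eq_orbitMeasure {P : Measure (Fin n → M)} [IsProbabilityMeasure P]
    (hP : IsSymmetric n P) (x : Fin n → M)
    (hx : P {y | ∃ σ : Equiv.Perm (Fin n), y = x ∘ σ}ᶜ = 0) :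
    P = orbitMeasure n x := by
  have hbind := bind_orbitMeasure hP
  rw [← hbind]
  ext s hs
  rw [Measure.bind_apply hs measurable_orbitMeasure.aemeasurable]
  have hae : ∀ᵐ y ∂P, orbitMeasure n y = orbitMeasure n x := by
    rw [ae_iff]
    apply measure_mono_null _ hx
    intro y hy
    simp only [Set.mem_compl_iff, Set.mem_setOf_eq]
    rintro ⟨σ, rfl⟩
    exact hy (orbitMeasure_comp x σ)
  rw [lintegral_congr_ae (hae.mono fun y hy => by rw [hy]), lintegral_const, measure_univ,
    mul_one]

end Aux

/-- Finite Hewitt–Savage theorem: the extreme points of the convex set of symmetric Borel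
probability measures on `M^n` are precisely the measures `(1/n!) Σ_{σ∈S_n} δ_{x∘σ}` for
`x ∈ M^n`, and every symmetric probability measure on `M^n` is a mixture of such extreme
points. -/
theorem stmt_17 {M : Type*} [MetricSpace M] [CompleteSpace M] [SecondCountableTopology M]
    [MeasurableSpace M] [BorelSpace M] (n : ℕ) (hn : 1 ≤ n) :
    (∀ P : Measure (Fin n → M),
      (IsProbabilityMeasure P ∧ IsSymmetric n P ∧
        ∀ (Q R : Measure (Fin n → M)) (t : ENNReal),
          IsProbabilityMeasure Q → IsSymmetric n Q →
          IsProbabilityMeasure R → IsSymmetric n R →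
          0 < t → t < 1 → P = t • Q + (1 - t) • R → Q = P ∧ R = P)
      ↔ ∃ x : Fin n → M, P = orbitMeasure n x) ∧
    (∀ P : Measure (Fin n → M), IsProbabilityMeasure P → IsSymmetric n P →
      ∃ ν : Measure (Fin n → M), IsProbabilityMeasure ν ∧
        P = ν.bind (orbitMeasure n)) := by
  constructor
  · intro P
    constructor
    · -- forward: extreme point → orbit measure
      rintro ⟨hprob, hsymm, hext⟩
      haveI := hprob
      -- every invariant measurable set has measure 0 or 1
      have zero_or_one : ∀ A : Set (Fin n → M), MeasurableSet A →
          (∀ σ : Equiv.Perm (Fin n), (fun y : Fin n → M => y ∘ σ) ⁻¹' A = A) →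
          P A = 0 ∨ P A = 1 := by
        intro A hA hinv
        by_contra hcon
        push_neg at hcon
        obtain ⟨h0, h1⟩ := hcon
        have hle : P A ≤ 1 := prob_le_one
        have hlt : P A < 1 := lt_of_le_of_ne hle h1
        have htne : P A ≠ ⊤ := (hlt.trans ENNReal.one_lt_top).ne
        have h1t0 : (1 : ENNReal) - P A ≠ 0 := (tsub_pos_iff_lt.mpr hlt).ne'
        have h1tne : (1 : ENNReal) - P A ≠ ⊤ :=
          ((tsub_le_self).trans_lt ENNReal.one_lt_top).ne
        set Q := (P A)⁻¹ • P.restrict A with hQdef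
        set R := ((1 : ENNReal) - P A)⁻¹ • P.restrict Aᶜ with hRdef
        have hrestr : ∀ (B : Set (Fin n → M)), MeasurableSet B →
            (∀ σ : Equiv.Perm (Fin n), (fun y : Fin n → M => y ∘ σ) ⁻¹' B = B) →
            ∀ σ : Equiv.Perm (Fin n),
              (P.restrict B).map (fun y => y ∘ σ) = P.restrict B := by
          intro B hB hBinv σ
          ext s hs
          rw [Measure.map_apply (measurable_permMap σ) hs,
            Measure.restrict_apply ((measurable_permMap σ) hs),
            Measure.restrict_apply hs]
          conv_lhs => rw [← hBinv σ]
          rw [← Set.preimage_inter, ← Measure.map_apply (measurable_permMap σ) (hs.inter hB),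
            hsymm σ]
        have hAcinv : ∀ σ : Equiv.Perm (Fin n), (fun y : Fin n → M => y ∘ σ) ⁻¹' Aᶜ = Aᶜ := by
          intro σ
          rw [Set.preimage_compl, hinv σ]
        have hPAc : P Aᶜ = 1 - P A := prob_compl_eq_one_sub hA
        have hQprob : IsProbabilityMeasure Q := by
          constructor
          rw [hQdef, Measure.smul_apply, Measure.restrict_apply_univ, smul_eq_mul]
          exact ENNReal.inv_mul_cancel h0 htne
        have hRprob : IsProbabilityMeasure R := by
          constructor
          rw [hRdef, Measure.smul_apply, Measure.restrict_apply_univ, smul_eq_mul, hPAc]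
          exact ENNReal.inv_mul_cancel h1t0 h1tne
        have hQsymm : IsSymmetric n Q := by
          intro σ
          rw [hQdef, Measure.map_smul, hrestr A hA hinv σ]
        have hRsymm : IsSymmetric n R := by
          intro σ
          rw [hRdef, Measure.map_smul, hrestr Aᶜ hA.compl hAcinv σ]
        have hdecomp : P = P A • Q + (1 - P A) • R := by
          rw [hQdef, hRdef, smul_smul, smul_smul,
            ENNReal.mul_inv_cancel h0 htne, ENNReal.mul_inv_cancel h1t0 h1tne,
            one_smul, one_smul, Measure.restrict_add_restrict_compl hA]
        obtain ⟨hQP, -⟩ := hext Q R (P A) hQprob hQsymm hRprob hRsymm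
          (pos_iff_ne_zero.mpr h0) hlt hdecomp
        have : Q A = P A := by rw [hQP]
        rw [hQdef, Measure.smul_apply, Measure.restrict_apply hA, Set.inter_self,
          smul_eq_mul, ENNReal.inv_mul_cancel h0 htne] at this
        exact h1 this.symm
      -- the invariant open sets from a countable basis
      set X := (Fin n → M)
      set V : Set X → Set X :=
        fun U => ⋃ σ : Equiv.Perm (Fin n), (fun y : X => y ∘ σ) ⁻¹' U with hVdef
      have hVopen : ∀ U : Set X, IsOpen U → IsOpen (V U) := by
        intro U hU
        exact isOpen_iUnion fun σ =>
          hU.preimage (continuous_pi fun i => continuous_apply _)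
      have hVinv : ∀ (U : Set X) (τ : Equiv.Perm (Fin n)),
          (fun y : X => y ∘ τ) ⁻¹' (V U) = V U := by
        intro U τ
        ext y
        simp only [hVdef, Set.mem_preimage, Set.mem_iUnion]
        constructor
        · rintro ⟨σ, h⟩
          exact ⟨τ * σ, by rwa [comp_mul]⟩
        · rintro ⟨σ, h⟩
          refine ⟨τ⁻¹ * σ, ?_⟩
          rwa [← comp_mul, ← mul_assoc, mul_inv_cancel, one_mul]
      set 𝒰 := TopologicalSpace.countableBasis X with h𝒰
      set W : Set X → Set X := fun U => if P (V U) = 1 then V U else (V U)ᶜ with hWdef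
      set S : Set X := ⋂ U ∈ 𝒰, W U with hSdef
      have hWnull : ∀ U ∈ 𝒰, P (W U)ᶜ = 0 := by
        intro U hU
        have hVU : MeasurableSet (V U) :=
          (hVopen U (TopologicalSpace.isOpen_of_mem_countableBasis hU)).measurableSet
        by_cases h : P (V U) = 1
        · rw [hWdef]
          simp only [h, if_true]
          rw [prob_compl_eq_one_sub hVU, h, tsub_self]
        · rw [hWdef]
          simp only [h, if_false, compl_compl]
          rcases zero_or_one (V U) hVU (hVinv U) with h0 | h1
          · exact h0
          · exact absurd h1 h
      have hScompl : P Sᶜ = 0 := by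
        rw [hSdef, Set.compl_iInter₂]
        exact (measure_biUnion_null_iff (TopologicalSpace.countable_countableBasis X)).mpr
          hWnull
      have hSne : S.Nonempty := by
        by_contra h
        rw [Set.not_nonempty_iff_eq_empty] at h
        rw [h, Set.compl_empty, measure_univ] at hScompl
        exact one_ne_zero hScompl
      obtain ⟨x, hxS⟩ := hSne
      refine ⟨x, ?_⟩
      -- S is contained in the orbit of x
      have horbfin : (Set.range fun σ : Equiv.Perm (Fin n) => x ∘ σ).Finite :=
        Set.finite_range _
      have horbclosed : IsClosed (Set.range fun σ : Equiv.Perm (Fin n) => x ∘ σ) :=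
        horbfin.isClosed
      have hSorb : S ⊆ {y : X | ∃ σ : Equiv.Perm (Fin n), y = x ∘ σ} := by
        intro y hyS
        by_contra hy
        simp only [Set.mem_setOf_eq] at hy
        push_neg at hy
        have hyc : y ∈ (Set.range fun σ : Equiv.Perm (Fin n) => x ∘ σ)ᶜ := by
          intro hmem
          obtain ⟨σ, hσ⟩ := hmem
          exact hy σ hσ.symm
        obtain ⟨U, hU𝒰, hyU, hUsub⟩ :=
          (TopologicalSpace.isBasis_countableBasis X).exists_subset_of_mem_open hyc
            horbclosed.isOpen_compl
        have hyV : y ∈ V U := by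
          rw [hVdef]
          apply Set.mem_iUnion.mpr
          exact ⟨1, by simpa using hyU⟩
        have hxW : x ∈ W U := by
          have := Set.mem_iInter₂.mp hxS U hU𝒰
          exact this
        have hyW : y ∈ W U := Set.mem_iInter₂.mp hyS U hU𝒰
        by_cases h : P (V U) = 1
        · rw [hWdef] at hxW
          simp only [h, if_true] at hxW
          rcases Set.mem_iUnion.mp hxW with ⟨σ, hσ⟩
          exact hUsub hσ ⟨σ, rfl⟩
        · rw [hWdef] at hyW
          simp only [h, if_false] at hyW
          exact hyW hyV
      have horbnull : P {y : X | ∃ σ : Equiv.Perm (Fin n), y = x ∘ σ}ᶜ = 0 :=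
        measure_mono_null (Set.compl_subset_compl.mpr hSorb) hScompl
      exact eq_orbitMeasure hsymm x horbnull
    · -- reverse: orbit measure → extreme point
      rintro ⟨x, rfl⟩
      refine ⟨orbitMeasure_prob x, orbitMeasure_symm x, ?_⟩
      intro Q R t hQprob hQsymm hRprob hRsymm ht0 ht1 hdecomp
      haveI := hQprob
      haveI := hRprob
      set O : Set (Fin n → M) := {y | ∃ σ : Equiv.Perm (Fin n), y = x ∘ σ} with hOdef
      have hOmeas : MeasurableSet O := by
        have : O = Set.range fun σ : Equiv.Perm (Fin n) => x ∘ σ := by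
          ext y
          simp [hOdef, Set.mem_range, eq_comm]
        rw [this]
        exact (Set.finite_range _).measurableSet
      have hPO : orbitMeasure n x Oᶜ = 0 := by
        rw [orbitMeasure_apply x hOmeas.compl]
        have : ∀ σ : Equiv.Perm (Fin n), (Oᶜ).indicator (1 : (Fin n → M) → ENNReal) (x ∘ σ) = 0 := by
          intro σ
          apply Set.indicator_of_notMem
          simp only [Set.mem_compl_iff, hOdef, Set.mem_setOf_eq, not_not]
          exact ⟨σ, rfl⟩
        simp [this]
      have hsum : t * Q Oᶜ + (1 - t) * R Oᶜ = 0 := by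
        have h := hPO
        rw [hdecomp, Measure.add_apply, Measure.smul_apply, Measure.smul_apply,
          smul_eq_mul, smul_eq_mul] at h
        exact h
      rw [add_eq_zero] at hsum
      have hQO : Q Oᶜ = 0 := by
        rcases mul_eq_zero.mp hsum.1 with h | h
        · exact absurd h ht0.ne'
        · exact h
      have hRO : R Oᶜ = 0 := by
        rcases mul_eq_zero.mp hsum.2 with h | h
        · exact absurd h (tsub_pos_iff_lt.mpr ht1).ne'
        · exact h
      exact ⟨eq_orbitMeasure hQsymm x hQO, eq_orbitMeasure hRsymm x hRO⟩
  · intro P hprob hsymm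
    haveI := hprob
    exact ⟨P, hprob, (bind_orbitMeasure hsymm).symm⟩
end

section
/- Equivalence of q-means and k-means clustering: for x̄ = π(x) ∈ M^n/S_n, a sample ȳ in the q-skeleton minimizes d̄_p(x̄, ·) over the q-skeleton if and only if the distinct values z_1,...,z_r (r ≤ q) of ȳ, with appropriate multiplicities, minimize the k-means objective Σ_{i=1}^n min_{j≤q} d(x_i, z_j)^p over all choices of q points z_1,...,z_q ∈ M. -/
/-- The `L^p` distance `d_p(x,y) = ((1/n) Σᵢ d(xᵢ,yᵢ)^p)^(1/p)` on `M^n`. -/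
noncomputable def dp {M : Type*} [MetricSpace M] (n : ℕ) (p : ℝ) (x y : Fin n → M) : ℝ :=
  ((1 / (n : ℝ)) * ∑ i, dist (x i) (y i) ^ p) ^ (1 / p)

/-- The quotient distance `d̄_p(π x, π y) = inf_σ d_p(x, y∘σ)` on `M^n/S_n`. -/
noncomputable def dbar {M : Type*} [MetricSpace M] (n : ℕ) (p : ℝ) (x y : Fin n → M) : ℝ :=
  ⨅ σ : Equiv.Perm (Fin n), dp n p x (y ∘ σ)

/-- The `k`-means objective (with `k = q` centroids and power `p`):
`F(z) = Σᵢ min_j d(xᵢ, z_j)^p`. -/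
noncomputable def kMeansObj {M : Type*} [MetricSpace M] (n q : ℕ) (p : ℝ)
    (x : Fin n → M) (z : Fin q → M) : ℝ :=
  ∑ i, ⨅ j : Fin q, dist (x i) (z j) ^ p

/-- Two functions on `Fin n` with equal fiber cardinalities differ by a permutation. -/
lemma exists_perm_of_ncard_fibers {n : ℕ} {M : Type*} {A y : Fin n → M}
    (h : ∀ m : M, {i : Fin n | A i = m}.ncard = {j : Fin n | y j = m}.ncard) :
    ∃ σ : Equiv.Perm (Fin n), ∀ i, y (σ i) = A i := by
  have e : ∀ m : M, Nonempty ({i // A i = m} ≃ {j // y j = m}) := by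
    intro m
    refine Finite.card_eq.mp ?_
    have h1 : Nat.card ({i : Fin n | A i = m} : Set (Fin n)) =
        Nat.card ({j : Fin n | y j = m} : Set (Fin n)) := by
      rw [Nat.card_coe_set_eq, Nat.card_coe_set_eq]; exact h m
    exact h1
  exact ⟨Equiv.ofFiberEquiv (fun m => (e m).some),
    fun i => Equiv.ofFiberEquiv_map _ i⟩

/-- A nonempty finite set of cardinality `≤ q` is the range of some `Fin q`-tuple. -/
lemma exists_listing {M : Type*} {q : ℕ} (s : Set M) (hne : s.Nonempty)
    (hfin : s.Finite) (hcard : s.ncard ≤ q) : ∃ z : Fin q → M, Set.range z = s := by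
  classical
  set t := hfin.toFinset with ht
  have htc : t.card = s.ncard := (Set.ncard_eq_toFinset_card s hfin).symm
  refine ⟨fun j => if h : (j : ℕ) < t.card then (t.equivFin.symm ⟨j, h⟩ : M) else hne.choose, ?_⟩
  ext a
  constructor
  · rintro ⟨j, rfl⟩
    by_cases h : (j : ℕ) < t.card
    · simp only [dif_pos h]
      exact hfin.mem_toFinset.mp (t.equivFin.symm ⟨j, h⟩).2
    · simp only [dif_neg h]; exact hne.choose_spec
  · intro ha
    have hat : a ∈ t := hfin.mem_toFinset.mpr ha
    set k := t.equivFin ⟨a, hat⟩ with hk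
    have hkq : (k : ℕ) < q := lt_of_lt_of_le k.2 (htc ▸ hcard)
    refine ⟨⟨k, hkq⟩, ?_⟩
    have h2 : ((⟨k, hkq⟩ : Fin q) : ℕ) < t.card := k.2
    simp only [dif_pos h2]
    have h3 : (⟨(k : ℕ), h2⟩ : Fin t.card) = k := rfl
    rw [h3, hk, Equiv.symm_apply_apply]

section dbarlemmas
variable {M : Type*} [MetricSpace M] {n : ℕ} {p : ℝ}

lemma sum_pow_nonneg (x u : Fin n → M) (hp : 0 ≤ p) :
    0 ≤ ∑ i, dist (x i) (u i) ^ p :=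
  Finset.sum_nonneg fun i _ => Real.rpow_nonneg dist_nonneg p

lemma dp_le_dp (hp : 1 ≤ p) {x u v : Fin n → M}
    (h : ∑ i, dist (x i) (u i) ^ p ≤ ∑ i, dist (x i) (v i) ^ p) :
    dp n p x u ≤ dp n p x v := by
  unfold dp
  have h0 : (0:ℝ) ≤ 1 / (n : ℝ) := by positivity
  exact Real.rpow_le_rpow
    (mul_nonneg h0 (sum_pow_nonneg x u (le_trans zero_le_one hp)))
    (mul_le_mul_of_nonneg_left h h0) (by positivity)

lemma dp_le_dp_iff (hn : 1 ≤ n) (hp : 1 ≤ p) {x u v : Fin n → M} :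
    dp n p x u ≤ dp n p x v ↔
      ∑ i, dist (x i) (u i) ^ p ≤ ∑ i, dist (x i) (v i) ^ p := by
  have hp0 : (0:ℝ) < p := lt_of_lt_of_le zero_lt_one hp
  have hn0 : (0:ℝ) < 1 / (n : ℝ) := by
    have : (0:ℝ) < (n:ℝ) := by exact_mod_cast hn
    positivity
  unfold dp
  rw [Real.rpow_le_rpow_iff
      (mul_nonneg hn0.le (sum_pow_nonneg x u hp0.le))
      (mul_nonneg hn0.le (sum_pow_nonneg x v hp0.le)) (by positivity),
    mul_le_mul_iff_right₀ hn0]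

lemma dbar_le_dp_comp (x u : Fin n → M) (σ : Equiv.Perm (Fin n)) :
    dbar n p x u ≤ dp n p x (u ∘ σ) :=
  ciInf_le (Set.finite_range _).bddBelow σ

lemma dbar_le_dp' (x u : Fin n → M) : dbar n p x u ≤ dp n p x u := by
  have := dbar_le_dp_comp (p := p) x u 1
  simpa using this

lemma dbar_exists_min (hp : 1 ≤ p) (x u : Fin n → M) :
    ∃ σ : Equiv.Perm (Fin n), dbar n p x u = dp n p x (u ∘ σ) ∧
      ∀ τ : Equiv.Perm (Fin n),
        ∑ i, dist (x i) (u (σ i)) ^ p ≤ ∑ i, dist (x i) (u (τ i)) ^ p := by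
  obtain ⟨σ, hσ⟩ := Finite.exists_min (fun σ : Equiv.Perm (Fin n) =>
    ∑ i, dist (x i) (u (σ i)) ^ p)
  refine ⟨σ, le_antisymm (dbar_le_dp_comp x u σ) (le_ciInf fun τ => dp_le_dp hp (hσ τ)), hσ⟩

end dbarlemmas

/-- Equivalence of `q`-means and `k`-means clustering: a sample `ȳ = π(y)` in the
`q`-skeleton minimizes `d̄_p(π x, ·)` over the `q`-skeleton if and only if the distinct
values of `y` (listed, with repetition allowed, as a `q`-tuple `z`) minimize the `k`-means
objective `Σᵢ min_j d(xᵢ, z_j)^p` over all `q`-tuples, with appropriate multiplicities: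
the points `xᵢ` can be assigned to nearest values of `y` realizing exactly the
multiplicities of `y`. -/
theorem stmt_19 {M : Type*} [MetricSpace M] (n q : ℕ) (hn : 1 ≤ n) (hq : 1 ≤ q)
    (hqn : q ≤ n) (p : ℝ) (hp : 1 ≤ p) (x y : Fin n → M)
    (hy : (Set.range y).ncard ≤ q) :
    (∀ w : Fin n → M, (Set.range w).ncard ≤ q → dbar n p x y ≤ dbar n p x w) ↔
    ((∃ z : Fin q → M, Set.range z = Set.range y ∧
        ∀ w : Fin q → M, kMeansObj n q p x z ≤ kMeansObj n q p x w) ∧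
      ∃ A : Fin n → M,
        (∀ i, A i ∈ Set.range y ∧ ∀ m ∈ Set.range y, dist (x i) (A i) ≤ dist (x i) m) ∧
        ∀ m : M, {i : Fin n | A i = m}.ncard = {j : Fin n | y j = m}.ncard) := by
  classical
  haveI : Nonempty (Fin q) := ⟨⟨0, hq⟩⟩
  have hp0 : (0:ℝ) < p := lt_of_lt_of_le zero_lt_one hp
  have i0 : Fin n := ⟨0, hn⟩
  have hyne : (Set.range y).Nonempty := ⟨y i0, Set.mem_range_self _⟩
  have hyfin : (Set.range y).Finite := Set.finite_range y
  constructor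
  · intro H
    have hmin : ∀ i : Fin n, ∃ m ∈ Set.range y, ∀ m' ∈ Set.range y,
        dist (x i) m ≤ dist (x i) m' :=
      fun i => Set.exists_min_image _ (fun m => dist (x i) m) hyfin hyne
    choose A hA1 hA2 using hmin
    obtain ⟨σ, hσeq, hσmin⟩ := dbar_exists_min hp x y
    have hAsub : Set.range A ⊆ Set.range y := by
      rintro _ ⟨i, rfl⟩; exact hA1 i
    have hAcard : (Set.range A).ncard ≤ q :=
      le_trans (Set.ncard_le_ncard hAsub hyfin) hy
    have key1 : ∀ i ∈ Finset.univ, dist (x i) (A i) ^ p ≤ dist (x i) (y (σ i)) ^ p :=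
      fun i _ => Real.rpow_le_rpow dist_nonneg (hA2 i _ (Set.mem_range_self _)) hp0.le
    have key2 : ∑ i, dist (x i) (y (σ i)) ^ p ≤ ∑ i, dist (x i) (A i) ^ p := by
      have h := (H A hAcard).trans (dbar_le_dp' x A)
      rw [hσeq] at h
      exact (dp_le_dp_iff hn hp).mp h
    have hsum : ∑ i, dist (x i) (A i) ^ p = ∑ i, dist (x i) (y (σ i)) ^ p :=
      le_antisymm (Finset.sum_le_sum key1) key2
    have hterm : ∀ i, dist (x i) (A i) ^ p = dist (x i) (y (σ i)) ^ p :=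
      fun i => (Finset.sum_eq_sum_iff_of_le key1).mp hsum i (Finset.mem_univ i)
    have hdist : ∀ i, dist (x i) (y (σ i)) = dist (x i) (A i) := by
      intro i
      refine le_antisymm ?_ (hA2 i _ (Set.mem_range_self _))
      exact (Real.rpow_le_rpow_iff dist_nonneg dist_nonneg hp0).mp
        (le_of_eq (hterm i).symm)
    constructor
    · obtain ⟨z, hz⟩ := exists_listing (Set.range y) hyne hyfin hy
      refine ⟨z, hz, ?_⟩
      intro w
      have hzy : ∀ j, z j ∈ Set.range y := fun j => hz ▸ Set.mem_range_self j
      have hzobj : kMeansObj n q p x z = ∑ i, dist (x i) (A i) ^ p := by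
        unfold kMeansObj
        refine Finset.sum_congr rfl fun i _ => ?_
        refine le_antisymm ?_
          (le_ciInf fun j => Real.rpow_le_rpow dist_nonneg (hA2 i _ (hzy j)) hp0.le)
        obtain ⟨j, hj⟩ : A i ∈ Set.range z := hz.symm ▸ hA1 i
        have h5 := ciInf_le
          (Set.finite_range fun j : Fin q => dist (x i) (z j) ^ p).bddBelow j
        rw [hj] at h5; exact h5
      have hwmin : ∀ i : Fin n, ∃ j : Fin q, ∀ j', dist (x i) (w j) ≤ dist (x i) (w j') :=
        fun i => Finite.exists_min (fun j => dist (x i) (w j))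
      choose g hg using hwmin
      set w' : Fin n → M := fun i => w (g i) with hw'
      have hw'card : (Set.range w').ncard ≤ q := by
        have h1 : Set.range w' ⊆ Set.range w := by
          rintro _ ⟨i, rfl⟩; exact Set.mem_range_self _
        have h2 : (Set.range w).ncard ≤ q := by
          rw [← Set.image_univ]
          calc (w '' Set.univ).ncard ≤ (Set.univ : Set (Fin q)).ncard :=
                Set.ncard_image_le Set.finite_univ
          _ = q := by rw [Set.ncard_univ]; simp
        exact le_trans (Set.ncard_le_ncard h1 (Set.finite_range w)) h2
      have hwobj : kMeansObj n q p x w = ∑ i, dist (x i) (w' i) ^ p := by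
        unfold kMeansObj
        refine Finset.sum_congr rfl fun i _ => ?_
        exact le_antisymm (ciInf_le (Set.finite_range _).bddBelow (g i))
          (le_ciInf fun j => Real.rpow_le_rpow dist_nonneg (hg i j) hp0.le)
      have hle : ∑ i, dist (x i) (y (σ i)) ^ p ≤ ∑ i, dist (x i) (w' i) ^ p := by
        have h := (H w' hw'card).trans (dbar_le_dp' x w')
        rw [hσeq] at h
        exact (dp_le_dp_iff hn hp).mp h
      rw [hzobj, hwobj]
      calc ∑ i, dist (x i) (A i) ^ p = ∑ i, dist (x i) (y (σ i)) ^ p := hsum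
      _ ≤ _ := hle
    · refine ⟨fun i => y (σ i), fun i => ⟨Set.mem_range_self _, fun m hm => ?_⟩, ?_⟩
      · rw [hdist i]; exact hA2 i m hm
      · intro m
        have himg : {i : Fin n | y (σ i) = m} = σ.symm '' {j : Fin n | y j = m} := by
          ext i
          constructor
          · intro hi; exact ⟨σ i, hi, Equiv.symm_apply_apply σ i⟩
          · rintro ⟨j, hj, rfl⟩; simpa using hj
        rw [himg, Set.ncard_image_of_injective _ σ.symm.injective]
  · rintro ⟨⟨z, hz, hzmin⟩, A, hA, hAc⟩ w hw
    obtain ⟨σ, hσ⟩ := exists_perm_of_ncard_fibers hAc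
    obtain ⟨τ, hτeq, _⟩ := dbar_exists_min hp x w
    have hwne : (Set.range w).Nonempty := ⟨w i0, Set.mem_range_self _⟩
    obtain ⟨zw, hzw⟩ := exists_listing (Set.range w) hwne (Set.finite_range w) hw
    have hzy : ∀ j, z j ∈ Set.range y := fun j => hz ▸ Set.mem_range_self j
    have hzobj : kMeansObj n q p x z = ∑ i, dist (x i) (A i) ^ p := by
      unfold kMeansObj
      refine Finset.sum_congr rfl fun i _ => ?_
      refine le_antisymm ?_
        (le_ciInf fun j => Real.rpow_le_rpow dist_nonneg ((hA i).2 _ (hzy j)) hp0.le)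
      obtain ⟨j, hj⟩ : A i ∈ Set.range z := hz.symm ▸ (hA i).1
      have h5 := ciInf_le
        (Set.finite_range fun j : Fin q => dist (x i) (z j) ^ p).bddBelow j
      rw [hj] at h5; exact h5
    have hzwobj : kMeansObj n q p x zw ≤ ∑ i, dist (x i) (w (τ i)) ^ p := by
      unfold kMeansObj
      refine Finset.sum_le_sum fun i _ => ?_
      obtain ⟨j, hj⟩ : w (τ i) ∈ Set.range zw := hzw.symm ▸ Set.mem_range_self _
      have h5 := ciInf_le
        (Set.finite_range fun j : Fin q => dist (x i) (zw j) ^ p).bddBelow j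
      rw [hj] at h5; exact h5
    have hchain : ∑ i, dist (x i) (y (σ i)) ^ p ≤ ∑ i, dist (x i) (w (τ i)) ^ p := by
      calc ∑ i, dist (x i) (y (σ i)) ^ p = ∑ i, dist (x i) (A i) ^ p :=
            Finset.sum_congr rfl fun i _ => by rw [hσ i]
      _ = kMeansObj n q p x z := hzobj.symm
      _ ≤ kMeansObj n q p x zw := hzmin zw
      _ ≤ _ := hzwobj
    calc dbar n p x y ≤ dp n p x (y ∘ σ) := dbar_le_dp_comp x y σ
    _ ≤ dp n p x (w ∘ τ) := dp_le_dp hp hchain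
    _ = dbar n p x w := hτeq.symm
end
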